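/- Let k be a field, H a finite-dimensional hereditary k-algebra (e.g. the path algebra kQ of a finite acyclic quiver), and Λ = H[x]/⟨x²⟩ the dual-number algebra over H. Let (N, ε) be a perfect differential H-module, i.e. N is a finitely generated projective H-module and ε ∈ End_H(N) with ε² = 0. Then the following are equivalent: (1) the homology H(N, ε) = Ker ε / Im ε is zero; (2) (N, ε) is a projective Λ-module; (3) (N, ε) ≅ (P ⊕ P, [[0,1],[0,0]]) for some finitely generated projective H-module P, i.e. N ≅ P ⊕ P with ε mapping the second copy identically onto the first and killing the first. -/

import Mathlib

universe u

open TrivSqZeroExt DualNumber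

instance dnTower (H : Type*) [Ring H] : IsScalarTower H (DualNumber H) (DualNumber H) :=
  ⟨fun h x y => by
    ext
    · simp [TrivSqZeroExt.fst_mul, smul_eq_mul, mul_assoc]
    · simp [TrivSqZeroExt.snd_mul, smul_eq_mul, mul_add, mul_assoc,
        MulOpposite.smul_eq_mul_unop]⟩

section helpers
set_option linter.unusedSectionVars false
variable {H : Type*} [Ring H] {M : Type*} [AddCommGroup M] [Module H M]
  [Module (DualNumber H) M] [IsScalarTower H (DualNumber H) M]

lemma inl_smul' (h : H) (x : M) : (inl h : DualNumber H) • x = h • x := by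
  have : h • (1 : DualNumber H) = inl h := by ext <;> simp
  rw [← this, smul_assoc, one_smul]

lemma eps_smul_comm (h : H) (x : M) :
    (ε : DualNumber H) • (h • x) = h • ((ε : DualNumber H) • x) := by
  rw [← inl_smul' h x, smul_smul, (DualNumber.commute_eps_left _).eq, ← smul_smul, inl_smul']

lemma eps_smul_eps (x : M) : (ε : DualNumber H) • (ε : DualNumber H) • x = 0 := by
  rw [smul_smul, DualNumber.eps_mul_eps, zero_smul]

lemma dn_smul_decomp (c : DualNumber H) (x : M) :
    c • x = c.fst • x + c.snd • ((ε : DualNumber H) • x) := by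
  conv_lhs => rw [← TrivSqZeroExt.inl_fst_add_inr_snd_eq c]
  rw [add_smul, DualNumber.inr_eq_smul_eps, smul_assoc, inl_smul']

/-- the `eps`-action as an `H`-linear endomorphism -/
def epsHom (H : Type*) [Ring H] (M : Type*) [AddCommGroup M] [Module H M]
    [Module (DualNumber H) M] [IsScalarTower H (DualNumber H) M] : M →ₗ[H] M where
  toFun x := (ε : DualNumber H) • x
  map_add' x y := smul_add _ x y
  map_smul' h x := eps_smul_comm h x

@[simp] lemma epsHom_apply (x : M) : epsHom H M x = (ε : DualNumber H) • x := rfl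

end helpers

section imp13
variable (H : Type u) [Ring H] (N : Type u) [AddCommGroup N] [Module H N]
  [Module (DualNumber H) N] [IsScalarTower H (DualNumber H) N]

lemma imp13 [Module.Finite H N]
    (hhered : ∀ N' : Submodule H N, Module.Projective H N')
    (h1 : ∀ n : N, (ε : DualNumber H) • n = 0 → ∃ m, (ε : DualNumber H) • m = n) :
    ∃ (P : Type u) (_ : AddCommGroup P) (_ : Module H P),
      Module.Projective H P ∧ Module.Finite H P ∧
      ∃ e : N ≃ₗ[H] P × P, ∀ n : N, e ((ε : DualNumber H) • n) = ((e n).2, 0) := by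
  set εL : N →ₗ[H] N := epsHom H N with hεL
  set Pm : Submodule H N := LinearMap.range εL with hPm
  have hker : LinearMap.ker εL = Pm := by
    apply le_antisymm
    · intro x hx
      obtain ⟨m, hm⟩ := h1 x (by simpa [hεL] using hx)
      exact ⟨m, by simpa [hεL] using hm⟩
    · rintro x ⟨y, rfl⟩
      simp [hεL, eps_smul_eps]
  have hprojP : Module.Projective H Pm := hhered Pm
  have hfinP : Module.Finite H Pm := Module.Finite.range εL
  set f : N →ₗ[H] Pm := εL.rangeRestrict with hf
  obtain ⟨s, hs⟩ := Module.projective_lifting_property f LinearMap.id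
    εL.surjective_rangeRestrict
  have hsf : ∀ p : Pm, f (s p) = p := fun p => by
    simpa using LinearMap.congr_fun hs p
  have hfc : ∀ x : N, (f x : N) = εL x := fun x => rfl
  have hmem : ∀ x : N, (LinearMap.id - s ∘ₗ f : N →ₗ[H] N) x ∈ Pm := by
    intro x
    have hx : (LinearMap.id - s ∘ₗ f : N →ₗ[H] N) x ∈ LinearMap.ker εL := by
      simp only [LinearMap.mem_ker, LinearMap.sub_apply, LinearMap.id_apply,
        LinearMap.comp_apply, map_sub]
      rw [← hfc (s (f x)), hsf, hfc, sub_self]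
    exact hker.le hx
  set fwd : N →ₗ[H] Pm × Pm :=
    LinearMap.prod ((LinearMap.id - s ∘ₗ f).codRestrict Pm hmem) f with hfwd
  set bwd : (Pm × Pm : Type u) →ₗ[H] N := LinearMap.coprod Pm.subtype s with hbwd
  have hfP : ∀ p : Pm, f (p : N) = 0 := by
    intro p
    have hp : (p : N) ∈ LinearMap.ker εL := by rw [hker]; exact p.2
    exact Subtype.ext (by rw [hfc]; exact hp)
  have h1' : fwd ∘ₗ bwd = LinearMap.id := by
    apply LinearMap.ext; intro z
    have hfz : f ((z.1 : N) + s z.2) = z.2 := by rw [map_add, hfP, hsf, zero_add]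
    have hb : bwd z = (z.1 : N) + s z.2 := rfl
    apply Prod.ext
    · apply Subtype.ext
      show ((z.1 : N) + s z.2) - s (f ((z.1 : N) + s z.2)) = (z.1 : N)
      rw [hfz, add_sub_cancel_right]
    · show f ((z.1 : N) + s z.2) = z.2
      exact hfz
  have h2' : bwd ∘ₗ fwd = LinearMap.id := by
    apply LinearMap.ext; intro x
    show (x - s (f x)) + s (f x) = x
    exact sub_add_cancel x _
  refine ⟨Pm, inferInstance, inferInstance, hprojP, hfinP,
    LinearEquiv.ofLinear fwd bwd h1' h2', ?_⟩
  intro n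
  have heq : (ε : DualNumber H) • n = εL n := rfl
  have hf0 : f (εL n) = 0 := Subtype.ext (by
    show εL (εL n) = 0
    simp [hεL, eps_smul_eps])
  rw [LinearEquiv.ofLinear_apply, LinearEquiv.ofLinear_apply, heq]
  apply Prod.ext
  · apply Subtype.ext
    show εL n - s (f (εL n)) = ((fwd n).2 : N)
    rw [hf0, map_zero, sub_zero]
    rfl
  · show f (εL n) = 0
    exact hf0
end imp13

section imp21
variable (H : Type u) [Ring H] (N : Type u) [AddCommGroup N] [Module H N]
  [Module (DualNumber H) N] [IsScalarTower H (DualNumber H) N]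

lemma imp21 (hproj2 : Module.Projective (DualNumber H) N) :
    ∀ n : N, (ε : DualNumber H) • n = 0 → ∃ m, (ε : DualNumber H) • m = n := by
  obtain ⟨s, hs⟩ := Module.projective_def.mp hproj2
  intro n hn
  have hsn : (ε : DualNumber H) • s n = 0 := by rw [← map_smul, hn, map_zero]
  have hfst : ∀ b : N, ((s n) b).fst = 0 := by
    intro b
    have h0 : (ε : DualNumber H) * (s n) b = 0 := by
      have := DFunLike.congr_fun hsn b
      simpa [smul_eq_mul] using this
    have := congrArg TrivSqZeroExt.snd h0
    simpa [TrivSqZeroExt.snd_mul, MulOpposite.smul_eq_mul_unop] using this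
  refine ⟨(s n).sum fun b c => c.snd • b, ?_⟩
  rw [Finsupp.smul_sum]
  have hterm : ∀ b ∈ (s n).support,
      (ε : DualNumber H) • (((s n) b).snd • b) = (s n) b • b := by
    intro b _
    rw [eps_smul_comm, dn_smul_decomp ((s n) b) b, hfst b, zero_smul, zero_add]
  have hcg : ((s n).sum fun b c => (ε : DualNumber H) • (c.snd • b))
      = (s n).sum fun b c => c • b := Finsupp.sum_congr hterm
  rw [hcg]
  have := hs n
  rwa [Finsupp.linearCombination_apply] at this
end imp21

section imp32
variable (H : Type u) [Ring H] (N : Type u) [AddCommGroup N] [Module H N]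
  [Module (DualNumber H) N] [IsScalarTower H (DualNumber H) N]

/-- `inl : H → H[ε]` as an `H`-linear map. -/
def inlLinear : H →ₗ[H] DualNumber H where
  toFun := inl
  map_add' a b := by ext <;> simp
  map_smul' h a := by ext <;> simp [smul_eq_mul]

lemma imp32
    (h3 : ∃ (P : Type u) (_ : AddCommGroup P) (_ : Module H P),
      Module.Projective H P ∧ Module.Finite H P ∧
      ∃ e : N ≃ₗ[H] P × P, ∀ n : N, e ((ε : DualNumber H) • n) = ((e n).2, 0)) :
    Module.Projective (DualNumber H) N := by
  obtain ⟨P, _, _, hP, _, e, he⟩ := h3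
  obtain ⟨σ, hσ⟩ := Module.projective_def.mp hP
  set v : P → N := fun b => e.symm (0, b) with hv
  set π : (P →₀ DualNumber H) →ₗ[DualNumber H] N := Finsupp.linearCombination _ v with hπ
  set mr : (P →₀ H) →ₗ[H] (P →₀ DualNumber H) :=
    Finsupp.mapRange.linearMap (inlLinear H) with hmr
  have key0 : ∀ w : P →₀ H, π (mr w) = Finsupp.linearCombination H v w := by
    intro w
    rw [hπ, hmr, Finsupp.linearCombination_apply, Finsupp.linearCombination_apply]
    show (Finsupp.mapRange (inlLinear H) (map_zero _) w).sum (fun b c => c • v b) = _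
    rw [Finsupp.sum_mapRange_index (by simp)]
    refine Finsupp.sum_congr fun b _ => ?_
    show (inl (w b) : DualNumber H) • v b = w b • v b
    exact inl_smul' _ _
  have key1 : ∀ q : P, π (mr (σ q)) = e.symm (0, q) := by
    intro q
    rw [key0]
    have key : ∀ w : P →₀ H, Finsupp.linearCombination H v w
        = e.symm (0, Finsupp.linearCombination H id w) := by
      intro w
      induction w using Finsupp.induction_linear with
      | zero => simp; exact (map_zero e.symm).symm
      | add f g hf hg =>
          rw [map_add, hf, hg, map_add, ← map_add, Prod.mk_add_mk, zero_add]
      | single b a =>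
          rw [Finsupp.linearCombination_single, Finsupp.linearCombination_single, hv]
          rw [← map_smul, Prod.smul_mk, smul_zero]
          rfl
    rw [key, hσ q]
  have hv2 : ∀ x : P × P, (ε : DualNumber H) • e.symm x = e.symm (x.2, 0) := by
    intro x
    apply e.injective
    rw [he (e.symm x), e.apply_symm_apply, e.apply_symm_apply]
  set f₀ : N → (P →₀ DualNumber H) :=
    fun n => mr (σ (e n).2) + (ε : DualNumber H) • mr (σ (e n).1) with hf₀
  have hadd : ∀ x y : N, f₀ (x + y) = f₀ x + f₀ y := by
    intro x y
    simp only [hf₀, map_add, Prod.fst_add, Prod.snd_add, smul_add]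
    abel
  have hH : ∀ (h : H) (x : N), f₀ (h • x) = h • f₀ x := by
    intro h x
    simp only [hf₀, map_smul, Prod.smul_fst, Prod.smul_snd, smul_add]
    rw [eps_smul_comm]
  have heps : ∀ x : N, f₀ ((ε : DualNumber H) • x) = (ε : DualNumber H) • f₀ x := by
    intro x
    simp only [hf₀, he x, smul_add]
    rw [eps_smul_eps, add_zero]
    simp
  set s' : N →ₗ[DualNumber H] (P →₀ DualNumber H) :=
    { toFun := f₀
      map_add' := hadd
      map_smul' := by
        intro c x
        simp only [RingHom.id_apply]
        rw [dn_smul_decomp c x, hadd, hH, hH, heps, ← dn_smul_decomp c (f₀ x)] } with hs'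
  have hsplit : π ∘ₗ s' = LinearMap.id := by
    apply LinearMap.ext; intro x
    show π (f₀ x) = x
    rw [hf₀]
    simp only [map_add, map_smul]
    rw [key1, key1, hv2]
    show e.symm (0, (e x).2) + e.symm ((e x).1, 0) = x
    rw [← map_add]
    have hx : ((0, (e x).2) + ((e x).1, 0) : P × P) = e x := by
      rw [Prod.mk_add_mk, zero_add, add_zero]
    rw [hx, e.symm_apply_apply]
  exact Module.Projective.of_split s' π hsplit
end imp32


/-- Theorem [RZ3, Theorem 2 (1)]. For a perfect differential
`H`-module `(N, ε)` over a finite-dimensional hereditary algebra `H`, the following are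
equivalent: (1) the homology `Ker ε / Im ε` vanishes; (2) `(N, ε)` is a projective
module over `Λ = H[x]/⟨x²⟩`; (3) `(N, ε) ≅ (P ⊕ P, [[0,1],[0,0]])` for some finitely
generated projective `H`-module `P`. -/
theorem stmt10 (k H : Type u) [Field k] [Ring H] [Algebra k H] [FiniteDimensional k H]
    -- `H` is hereditary: submodules of projective modules are projective
    (hhered : ∀ (P : Type u) [AddCommGroup P] [Module H P], Module.Projective H P →
      ∀ N' : Submodule H P, Module.Projective H N')
    (N : Type u) [AddCommGroup N] [Module H N]
    [Module (DualNumber H) N] [IsScalarTower H (DualNumber H) N]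
    -- `(N, ε)` is perfect: `N` is a finitely generated projective `H`-module
    (hfin : Module.Finite H N) (hproj : Module.Projective H N) :
    List.TFAE [
      -- (1) the homology `Ker ε / Im ε` is zero
      ∀ n : N, (DualNumber.eps : DualNumber H) • n = 0 →
        ∃ m : N, (DualNumber.eps : DualNumber H) • m = n,
      -- (2) `(N, ε)` is a projective `Λ`-module
      Module.Projective (DualNumber H) N,
      -- (3) `(N, ε) ≅ (P ⊕ P, [[0,1],[0,0]])`
      ∃ (P : Type u) (_ : AddCommGroup P) (_ : Module H P),
        Module.Projective H P ∧ Module.Finite H P ∧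
        ∃ e : N ≃ₗ[H] P × P,
          ∀ n : N, e ((DualNumber.eps : DualNumber H) • n) = ((e n).2, 0)
    ] := by
  haveI := hfin
  tfae_have 1 → 3 := fun h1 => imp13 H N (fun N' => hhered N hproj N') h1
  tfae_have 3 → 2 := fun h3 => imp32 H N h3
  tfae_have 2 → 1 := fun h2 => imp21 H N h2
  tfae_finish
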